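/- Let Ω ⊂ ℝⁿ be a bounded open set and let p : ℝⁿ → ℝⁿ be a map of class C¹ on a neighborhood of cl(Ω) such that det Dp(x) > 0 for every x ∈ Ω and ∫_Ω det Dp(x) dx ≤ ℒⁿ(p(Ω)). Then p is almost everywhere injective on Ω: there exists a Lebesgue-null set N ⊆ Ω such that the restriction of p to Ω \ N is injective. -/

import Mathlib

open MeasureTheory Set

private lemma cn_null_inter {α : Type*} [MeasurableSpace α] {μ : Measure α}
    {S : ℕ → Set α} (hS : ∀ i, MeasurableSet (S i))
    (hsum : μ (⋃ i, S i) = ∑' i, μ (S i)) (hfin : ∑' i, μ (S i) ≠ ⊤)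
    {i j : ℕ} (hij : i ≠ j) : μ (S i ∩ S j) = 0 := by
  classical
  set T : ℕ → Set α := fun k => if k = j then S j \ S i else S k with hT
  have hTsub : (⋃ k, S k) ⊆ ⋃ k, T k := by
    intro x hx
    obtain ⟨k, hk⟩ := mem_iUnion.1 hx
    by_cases hkj : k = j
    · subst hkj
      by_cases hxi : x ∈ S i
      · exact mem_iUnion.2 ⟨i, by simp [hT, hij, hxi]⟩
      · exact mem_iUnion.2 ⟨k, by simp [hT, hk, hxi]⟩
    · exact mem_iUnion.2 ⟨k, by simp [hT, hkj, hk]⟩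
  obtain ⟨R, htailS, htailT⟩ : ∃ R, (∑' k, μ (S k) = μ (S j) + R) ∧
      (∑' k, μ (T k) = μ (T j) + R) := by
    refine ⟨_, ENNReal.tsum_eq_add_tsum_ite j, ?_⟩
    rw [ENNReal.tsum_eq_add_tsum_ite (f := fun k => μ (T k)) j]
    congr 1
    refine tsum_congr fun k => ?_
    by_cases hkj : k = j <;> simp [hT, hkj]
  have hdecomp : μ (T j) + μ (S i ∩ S j) = μ (S j) := by
    have h := measure_diff_add_inter (μ := μ) (S j) (hS i)
    simpa [hT, Set.inter_comm] using h
  have hRfin : R ≠ ⊤ := fun h => hfin (by rw [htailS, h, add_top])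
  have hle2 : μ (S j) ≤ μ (T j) := by
    have hle : μ (S j) + R ≤ μ (T j) + R := by
      calc μ (S j) + R = ∑' k, μ (S k) := htailS.symm
      _ = μ (⋃ k, S k) := hsum.symm
      _ ≤ μ (⋃ k, T k) := measure_mono hTsub
      _ ≤ ∑' k, μ (T k) := measure_iUnion_le T
      _ = μ (T j) + R := htailT
    rw [add_comm (μ (S j)), add_comm (μ (T j))] at hle
    exact ENNReal.le_of_add_le_add_left hRfin hle
  have hTjfin : μ (T j) ≠ ⊤ := by
    intro h
    apply hfin
    rw [htailS, ← hdecomp, h, top_add]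
    simp [ENNReal.add_eq_top]
  have h2 : μ (T j) + μ (S i ∩ S j) ≤ μ (T j) + 0 := by
    rw [add_zero, hdecomp]; exact hle2
  simpa using ENNReal.le_of_add_le_add_left hTjfin h2

/-- **A.e. injectivity from the Ciarlet–Nečas condition**: if `p` is `C¹` on a
neighborhood of `cl(Ω)`, has positive Jacobian determinant on the bounded open
set `Ω`, and satisfies the Ciarlet–Nečas condition
`∫_Ω det Dp ≤ ℒⁿ(p(Ω))`, then `p` is injective outside a Lebesgue-null subset
of `Ω`. -/
theorem ciarlet_necas_ae_injective {n : ℕ}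
    (Ω : Set (EuclideanSpace ℝ (Fin n)))
    (hΩopen : IsOpen Ω) (hΩbdd : Bornology.IsBounded Ω)
    (p : EuclideanSpace ℝ (Fin n) → EuclideanSpace ℝ (Fin n))
    (hreg : ∃ U : Set (EuclideanSpace ℝ (Fin n)),
      IsOpen U ∧ closure Ω ⊆ U ∧ ContDiffOn ℝ 1 p U)
    (hdet : ∀ x ∈ Ω, 0 < LinearMap.det
      (fderiv ℝ p x : EuclideanSpace ℝ (Fin n) →ₗ[ℝ] EuclideanSpace ℝ (Fin n)))
    (hCN : ∫ x in Ω, LinearMap.det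
        (fderiv ℝ p x : EuclideanSpace ℝ (Fin n) →ₗ[ℝ] EuclideanSpace ℝ (Fin n)) ≤
      (volume (p '' Ω)).toReal) :
    ∃ N : Set (EuclideanSpace ℝ (Fin n)),
      N ⊆ Ω ∧ volume N = 0 ∧ InjOn p (Ω \ N) := by
  classical
  obtain ⟨U, hUopen, hclU, hpC1⟩ := hreg
  rcases Set.eq_empty_or_nonempty Ω with hΩe | hΩne
  · exact ⟨∅, by simp, by simp, by simp [hΩe]⟩
  have hcx : ∀ x ∈ Ω, ContDiffAt ℝ 1 p x := fun x hx =>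
    hpC1.contDiffAt (hUopen.mem_nhds (hclU (subset_closure hx)))
  have hdiff : ∀ x ∈ Ω, HasFDerivAt p (fderiv ℝ p x) x := fun x hx =>
    ((hcx x hx).differentiableAt one_ne_zero).hasFDerivAt
  -- local injectivity via the inverse function theorem
  have hloc : ∀ x ∈ Ω, ∃ V : Set (EuclideanSpace ℝ (Fin n)),
      IsOpen V ∧ x ∈ V ∧ V ⊆ Ω ∧ InjOn p V := by
    intro x hx
    have hdet0 : LinearMap.det ((fderiv ℝ p x) :
        EuclideanSpace ℝ (Fin n) →ₗ[ℝ] EuclideanSpace ℝ (Fin n)) ≠ 0 := (hdet x hx).ne'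
    let eq := LinearMap.equivOfDetNeZero _ hdet0
    let eqL := eq.toContinuousLinearEquiv
    have heq : (eqL : EuclideanSpace ℝ (Fin n) →L[ℝ] EuclideanSpace ℝ (Fin n))
        = fderiv ℝ p x := by ext v; rfl
    have hf' : HasFDerivAt p
        (eqL : EuclideanSpace ℝ (Fin n) →L[ℝ] EuclideanSpace ℝ (Fin n)) x :=
      heq ▸ hdiff x hx
    let e := (hcx x hx).toOpenPartialHomeomorph p hf' one_ne_zero
    refine ⟨e.source ∩ Ω, e.open_source.inter hΩopen,
      ⟨(hcx x hx).mem_toOpenPartialHomeomorph_source hf' one_ne_zero, hx⟩, inter_subset_right, ?_⟩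
    have hinj : InjOn p e.source := by
      have h := e.injOn
      rwa [show (e : EuclideanSpace ℝ (Fin n) → EuclideanSpace ℝ (Fin n)) = p from
        (hcx x hx).toOpenPartialHomeomorph_coe hf' one_ne_zero] at h
    exact hinj.mono inter_subset_left
  choose! V hVopen hVmem hVsub hVinj using hloc
  -- countable subcover
  obtain ⟨T, hTc, hTU⟩ := TopologicalSpace.isOpen_iUnion_countable
    (fun i : Ω => V i) (fun i => hVopen i i.2)
  have hTne : T.Nonempty := by
    by_contra h
    rw [Set.not_nonempty_iff_eq_empty] at h
    obtain ⟨x, hx⟩ := hΩne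
    have hxm : x ∈ ⋃ i : Ω, V i := mem_iUnion.2 ⟨⟨x, hx⟩, hVmem x hx⟩
    rw [← hTU, h] at hxm
    simp at hxm
  obtain ⟨f, hf⟩ := hTc.exists_eq_range hTne
  set W : ℕ → Set (EuclideanSpace ℝ (Fin n)) := fun k => V (f k) with hWdef
  have hWopen : ∀ k, IsOpen (W k) := fun k => hVopen _ (f k).2
  have hWsub : ∀ k, W k ⊆ Ω := fun k => hVsub _ (f k).2
  have hWinj : ∀ k, InjOn p (W k) := fun k => hVinj _ (f k).2
  have hWcover : Ω ⊆ ⋃ k, W k := by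
    intro x hx
    have hxm : x ∈ ⋃ i : Ω, V i := mem_iUnion.2 ⟨⟨x, hx⟩, hVmem x hx⟩
    rw [← hTU] at hxm
    simp only [mem_iUnion] at hxm
    obtain ⟨i, hiT, hi⟩ := hxm
    rw [hf] at hiT
    obtain ⟨k, hk⟩ := hiT
    exact mem_iUnion.2 ⟨k, by rw [hWdef]; simp only; rw [hk]; exact hi⟩
  -- disjointify the cover
  set A : ℕ → Set (EuclideanSpace ℝ (Fin n)) := disjointed W with hA
  have hAmeas : ∀ k, MeasurableSet (A k) :=
    MeasurableSet.disjointed (fun k => (hWopen k).measurableSet)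
  have hAdisj : Pairwise (Function.onFun Disjoint A) := disjoint_disjointed W
  have hAsub : ∀ k, A k ⊆ W k := disjointed_subset W
  have hAunion : ⋃ k, A k = Ω := by
    rw [hA, iUnion_disjointed]
    exact subset_antisymm (iUnion_subset hWsub) hWcover
  have hAΩ : ∀ k, A k ⊆ Ω := fun k => (hAsub k).trans (hWsub k)
  have hAinj : ∀ k, InjOn p (A k) := fun k => (hWinj k).mono (hAsub k)
  have hAderiv : ∀ k, ∀ x ∈ A k, HasFDerivWithinAt p (fderiv ℝ p x) (A k) x :=
    fun k x hx => (hdiff x (hAΩ k hx)).hasFDerivWithinAt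
  have harea : ∀ k, (∫⁻ x in A k, ENNReal.ofReal |(fderiv ℝ p x).det| ∂volume)
      = volume (p '' A k) :=
    fun k => lintegral_abs_det_fderiv_eq_addHaar_image volume (hAmeas k) (hAderiv k) (hAinj k)
  have hSmeas : ∀ k, MeasurableSet (p '' A k) := fun k =>
    measurable_image_of_fderivWithin (hAmeas k) (hAderiv k) (hAinj k)
  set g : EuclideanSpace ℝ (Fin n) → ENNReal :=
    fun x => ENNReal.ofReal |(fderiv ℝ p x).det| with hg
  have hgmeas : Measurable g :=
    ENNReal.measurable_ofReal.comp ((continuous_abs.comp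
      ContinuousLinearMap.continuous_det).measurable.comp (measurable_fderiv ℝ p))
  have hLsum : (∫⁻ x in Ω, g x) = ∑' k, volume (p '' A k) := by
    rw [← hAunion, lintegral_iUnion hAmeas hAdisj]
    exact tsum_congr fun k => harea k
  -- finiteness of the total integral
  have hΩc : IsCompact (closure Ω) := hΩbdd.isCompact_closure
  obtain ⟨C, hC⟩ : ∃ C, ∀ x ∈ closure Ω, ‖(fderiv ℝ p x).det‖ ≤ C := by
    have hcont : ContinuousOn (fun x => (fderiv ℝ p x).det) (closure Ω) :=
      (ContinuousLinearMap.continuous_det.comp_continuousOn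
        (hpC1.continuousOn_fderiv_of_isOpen hUopen le_rfl)).mono hclU
    exact hΩc.exists_bound_of_continuousOn hcont
  have hLfin : (∫⁻ x in Ω, g x) ≠ ⊤ := by
    have hbound : (∫⁻ x in Ω, g x) ≤ ENNReal.ofReal C * volume Ω := by
      rw [← setLIntegral_const Ω (ENNReal.ofReal C)]
      refine setLIntegral_mono' hΩopen.measurableSet fun x hx => ?_
      rw [hg]
      exact ENNReal.ofReal_le_ofReal
        (by simpa [Real.norm_eq_abs] using hC x (subset_closure hx))
    exact ne_top_of_le_ne_top
      (ENNReal.mul_ne_top ENNReal.ofReal_ne_top hΩbdd.measure_lt_top.ne) hbound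
  -- the Bochner integral equals the toReal of the Lebesgue integral
  have hdmeas : Measurable fun x => (fderiv ℝ p x).det :=
    ContinuousLinearMap.continuous_det.measurable.comp (measurable_fderiv ℝ p)
  have hint : (∫ x in Ω, (fderiv ℝ p x).det) = (∫⁻ x in Ω, g x).toReal := by
    rw [MeasureTheory.integral_eq_lintegral_of_nonneg_ae
      (ae_restrict_of_forall_mem hΩopen.measurableSet fun x hx => (hdet x hx).le)
      (hdmeas.aestronglyMeasurable)]
    congr 1
    refine setLIntegral_congr_fun hΩopen.measurableSet (fun x hx => ?_)
    rw [hg]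
    simp [abs_of_pos (hdet x hx)]
  -- the chain of (in)equalities forcing equality in the Ciarlet–Nečas condition
  have himg : p '' Ω = ⋃ k, p '' A k := by rw [← hAunion, image_iUnion]
  have hvol_le : volume (p '' Ω) ≤ ∫⁻ x in Ω, g x := by
    rw [himg, hLsum]
    exact measure_iUnion_le _
  have hvfin : volume (p '' Ω) ≠ ⊤ := ne_top_of_le_ne_top hLfin hvol_le
  have hCN' : (∫⁻ x in Ω, g x).toReal ≤ (volume (p '' Ω)).toReal := by
    rw [← hint]; exact hCN
  have hvol_eq : volume (p '' Ω) = ∫⁻ x in Ω, g x :=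
    le_antisymm hvol_le ((ENNReal.toReal_le_toReal hLfin hvfin).1 hCN')
  have hEq : volume (⋃ k, p '' A k) = ∑' k, volume (p '' A k) := by
    rw [← himg, hvol_eq, hLsum]
  have hfin2 : (∑' k, volume (p '' A k)) ≠ ⊤ := by rw [← hLsum]; exact hLfin
  have hpairnull : ∀ i j, i ≠ j → volume (p '' A i ∩ p '' A j) = 0 :=
    fun i j hij => cn_null_inter hSmeas hEq hfin2 hij
  -- the bad set
  set Bad : Set (EuclideanSpace ℝ (Fin n)) :=
    ⋃ i, ⋃ j, ⋃ (_ : i ≠ j), (p '' A i ∩ p '' A j) with hBad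
  have hBadmeas : MeasurableSet Bad :=
    MeasurableSet.iUnion fun i => MeasurableSet.iUnion fun j =>
      MeasurableSet.iUnion fun _ => (hSmeas i).inter (hSmeas j)
  have hBadnull : volume Bad = 0 :=
    measure_iUnion_null fun i => measure_iUnion_null fun j =>
      measure_iUnion_null fun h => hpairnull i j h
  refine ⟨Ω ∩ p ⁻¹' Bad, inter_subset_left, ?_, ?_⟩
  · -- the bad preimage is null
    have hsubT : Ω ∩ p ⁻¹' Bad ⊆ ⋃ k, (A k ∩ p ⁻¹' Bad) := by
      rintro x ⟨hxΩ, hxB⟩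
      obtain ⟨k, hk⟩ := mem_iUnion.1 (hAunion ▸ hxΩ : x ∈ ⋃ k, A k)
      exact mem_iUnion.2 ⟨k, hk, hxB⟩
    refine measure_mono_null hsubT (measure_iUnion_null fun k => ?_)
    have hTkmeas : MeasurableSet (A k ∩ p ⁻¹' Bad) := by
      have hemb := measurableEmbedding_of_fderivWithin (hAmeas k) (hAderiv k) (hAinj k)
      have heqset : A k ∩ p ⁻¹' Bad = Subtype.val '' (((A k).restrict p) ⁻¹' Bad) := by
        ext x
        constructor
        · rintro ⟨hxA, hxB⟩
          exact ⟨⟨x, hxA⟩, hxB, rfl⟩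
        · rintro ⟨⟨y, hy⟩, hyB, rfl⟩
          exact ⟨hy, hyB⟩
      rw [heqset]
      exact (hAmeas k).subtype_image (hemb.measurable hBadmeas)
    have hderivT : ∀ x ∈ A k ∩ p ⁻¹' Bad,
        HasFDerivWithinAt p (fderiv ℝ p x) (A k ∩ p ⁻¹' Bad) x :=
      fun x hx => ((hAderiv k) x hx.1).mono inter_subset_left
    have hzero : (∫⁻ x in A k ∩ p ⁻¹' Bad, g x) = 0 := by
      have harea2 := lintegral_abs_det_fderiv_eq_addHaar_image volume hTkmeas hderivT
        ((hAinj k).mono inter_subset_left)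
      have himgnull : volume (p '' (A k ∩ p ⁻¹' Bad)) = 0 :=
        measure_mono_null (by rintro y ⟨x, hx, rfl⟩; exact hx.2) hBadnull
      rw [hg]
      rw [harea2, himgnull]
    have hgae : g =ᵐ[volume.restrict (A k ∩ p ⁻¹' Bad)] 0 :=
      (lintegral_eq_zero_iff hgmeas).1 hzero
    have hae : ∀ᵐ x ∂volume, x ∈ A k ∩ p ⁻¹' Bad → g x = 0 :=
      (ae_restrict_iff' hTkmeas).1 hgae
    have hsub2 : A k ∩ p ⁻¹' Bad ⊆ {x | ¬ (x ∈ A k ∩ p ⁻¹' Bad → g x = 0)} := by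
      intro x hx h
      have hgpos : 0 < g x := by
        rw [hg]
        simp only
        rw [ENNReal.ofReal_pos]
        exact abs_pos.2 (hdet x (hAΩ k hx.1)).ne'
      exact hgpos.ne' (h hx)
    exact measure_mono_null hsub2 (ae_iff.1 hae)
  · -- injectivity off the bad preimage
    rintro x ⟨hxΩ, hxN⟩ y ⟨hyΩ, hyN⟩ hpxy
    obtain ⟨i, hxi⟩ := mem_iUnion.1 (hAunion ▸ hxΩ : x ∈ ⋃ k, A k)
    obtain ⟨j, hyj⟩ := mem_iUnion.1 (hAunion ▸ hyΩ : y ∈ ⋃ k, A k)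
    by_cases hij : i = j
    · subst hij
      exact hAinj i hxi hyj hpxy
    · exact absurd (⟨hxΩ, mem_iUnion.2 ⟨i, mem_iUnion.2 ⟨j, mem_iUnion.2
        ⟨hij, ⟨x, hxi, rfl⟩, ⟨y, hyj, hpxy.symm⟩⟩⟩⟩⟩ : x ∈ Ω ∩ p ⁻¹' Bad) hxN
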